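/- Let λ ∈ ℝ, 0 < β ≤ 1, h > 0, and let (k_n)_{n≥1} be a non-negative summable sequence with Σ_{n=1}^∞ k_n = κ and λ < −κ. Let (y_n)_{n≥0} be a sequence of non-negative real numbers with y_0 = 1 satisfying, for every n ≥ 1, (1 − βλh) y_n = (1 + (1−β)λh) y_{n−1} + βh Σ_{i=1}^{n−1} k_{n−i} y_i + (1−β)h Σ_{j=1}^{n−2} k_{n−j} y_j. Set α := (1/2) · ( (1 + (1−β)λh + κh)/(1 − βλh) + 1 ). Then y_n ≤ α for every n ≥ 1. -/

import Mathlib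

/-- Base case of the induction proving the weak A-stability induction lemma:
with `y 0 = 1`, every subsequent term is bounded by the contraction factor `α`.
The sequence `k` represents `(k_n)_{n ≥ 1}` (the value `k 0` is irrelevant). -/
theorem stmt_9 (lam : ℝ) (β h : ℝ) (hβ0 : 0 < β) (hβ1 : β ≤ 1) (hh : 0 < h)
    (k : ℕ → ℝ) (κ : ℝ)
    (hknn : ∀ n : ℕ, 1 ≤ n → 0 ≤ k n)
    (hksum : Summable (fun n : ℕ => k (n + 1)))
    (hκ : ∑' n : ℕ, k (n + 1) = κ)
    (hlam : lam < -κ)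
    (y : ℕ → ℝ) (hy : ∀ n, 0 ≤ y n) (hy0 : y 0 = 1)
    (hrec : ∀ n : ℕ, 1 ≤ n →
      (1 - β * lam * h) * y n
        = (1 + (1 - β) * lam * h) * y (n - 1)
          + β * h * ∑ i ∈ Finset.Icc 1 (n - 1), k (n - i) * y i
          + (1 - β) * h * ∑ j ∈ Finset.Icc 1 (n - 2), k (n - j) * y j) :
    ∀ n : ℕ, 1 ≤ n →
      y n ≤ (1 / 2) * ((1 + (1 - β) * lam * h + κ * h) / (1 - β * lam * h) + 1) := by
  obtain ⟨N, hN⟩ : ∃ x : ℝ, x = 1 + (1 - β) * lam * h + κ * h := ⟨_, rfl⟩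
  obtain ⟨D, hDdef⟩ : ∃ x : ℝ, x = 1 - β * lam * h := ⟨_, rfl⟩
  simp only [← hN, ← hDdef] at hrec ⊢
  obtain ⟨α, hα⟩ : ∃ x : ℝ, x = (1 / 2) * (N / D + 1) := ⟨_, rfl⟩
  simp only [← hα]
  have hκ0 : 0 ≤ κ := by
    rw [← hκ]
    exact tsum_nonneg fun n => hknn (n + 1) (Nat.le_add_left _ _)
  have hlam0 : lam < 0 := lt_of_lt_of_le hlam (by linarith)
  have hD : 0 < D := by
    have : 0 < β * h := mul_pos hβ0 hh
    rw [hDdef]; nlinarith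
  -- value of y 1
  have h1 := hrec 1 le_rfl
  have hIcc0 : Finset.Icc 1 0 = (∅ : Finset ℕ) := Finset.Icc_eq_empty (by omega)
  simp [hIcc0, hy0] at h1
  have hnum0 : 0 ≤ 1 + (1 - β) * lam * h := by
    have := mul_nonneg hD.le (hy 1)
    linarith [h1]
  have hND : N < D := by rw [hN, hDdef]; nlinarith
  have hN0 : 0 ≤ N := by rw [hN]; nlinarith
  have hα0 : 0 ≤ α := by
    have : 0 ≤ N / D := div_nonneg hN0 hD.le
    rw [hα]; linarith
  have hαD : α * D = (N + D) / 2 := by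
    rw [hα]; field_simp
  -- partial sums of k are bounded by κ
  have hsumk : ∀ m : ℕ, ∑ i ∈ Finset.Icc 1 m, k i ≤ κ := by
    intro m
    have e : ∑ i ∈ Finset.Icc 1 m, k i = ∑ j ∈ Finset.range m, k (j + 1) := by
      rw [← Finset.Ico_add_one_right_eq_Icc, Finset.sum_Ico_eq_sum_range]
      simp [add_comm]
    rw [e, ← hκ]
    exact Summable.sum_le_tsum _ (fun j _ => hknn (j + 1) (Nat.le_add_left _ _)) hksum
  -- per-n bound on the kernel sums
  have hker : ∀ n : ℕ, 2 ≤ n → ∑ i ∈ Finset.Icc 1 (n - 1), k (n - i) ≤ κ := by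
    intro n hn
    have e : ∑ i ∈ Finset.Icc 1 (n-1), k (n - i) = ∑ i ∈ Finset.Icc 1 (n-1), k i := by
      apply Finset.sum_nbij' (fun a => n - a) (fun a => n - a)
      all_goals intro a ha <;> simp [Finset.mem_Icc] at * <;> omega
    rw [e]; exact hsumk _
  intro n
  induction n using Nat.strong_induction_on with
  | _ n ih =>
    intro hn1
    rcases Nat.lt_or_ge n 2 with h2 | h2
    · -- n = 1
      have hn : n = 1 := by omega
      subst hn
      have : y 1 * D ≤ α * D := by
        rw [hαD]
        have hc : y 1 * D = 1 + (1 - β) * lam * h := by rw [mul_comm]; exact h1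
        have hκh : 0 ≤ κ * h := mul_nonneg hκ0 hh.le
        linarith [hc, hκh, hND, hN]
      exact le_of_mul_le_mul_right (by linarith [this]) hD
    · -- n ≥ 2
      have hrecn := hrec n (by omega)
      have hyn1 : y (n - 1) ≤ α := ih (n - 1) (by omega) (by omega)
      -- bound the two sums
      have hS1 : ∑ i ∈ Finset.Icc 1 (n - 1), k (n - i) * y i ≤ κ * α := by
        calc ∑ i ∈ Finset.Icc 1 (n - 1), k (n - i) * y i
            ≤ ∑ i ∈ Finset.Icc 1 (n - 1), k (n - i) * α := by
              apply Finset.sum_le_sum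
              intro i hi
              simp [Finset.mem_Icc] at hi
              exact mul_le_mul_of_nonneg_left (ih i (by omega) (by omega))
                (hknn (n - i) (by omega))
          _ = (∑ i ∈ Finset.Icc 1 (n - 1), k (n - i)) * α := by
              rw [Finset.sum_mul]
          _ ≤ κ * α := mul_le_mul_of_nonneg_right (hker n h2) hα0
      have hS2 : ∑ j ∈ Finset.Icc 1 (n - 2), k (n - j) * y j ≤ κ * α := by
        calc ∑ j ∈ Finset.Icc 1 (n - 2), k (n - j) * y j
            ≤ ∑ j ∈ Finset.Icc 1 (n - 2), k (n - j) * α := by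
              apply Finset.sum_le_sum
              intro j hj
              simp [Finset.mem_Icc] at hj
              exact mul_le_mul_of_nonneg_left (ih j (by omega) (by omega))
                (hknn (n - j) (by omega))
          _ ≤ ∑ i ∈ Finset.Icc 1 (n - 1), k (n - i) * α := by
              apply Finset.sum_le_sum_of_subset_of_nonneg
              · exact Finset.Icc_subset_Icc_right (by omega)
              · intro i hi _
                simp [Finset.mem_Icc] at hi
                exact mul_nonneg (hknn (n - i) (by omega)) hα0
          _ = (∑ i ∈ Finset.Icc 1 (n - 1), k (n - i)) * α := by
              rw [Finset.sum_mul]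
          _ ≤ κ * α := mul_le_mul_of_nonneg_right (hker n h2) hα0
      have hstep : D * y n ≤ α * N := by
        have hβh : 0 ≤ β * h := le_of_lt (mul_pos hβ0 hh)
        have hβh' : 0 ≤ (1 - β) * h := mul_nonneg (by linarith) hh.le
        have t1 : (1 + (1 - β) * lam * h) * y (n - 1) ≤ (1 + (1 - β) * lam * h) * α :=
          mul_le_mul_of_nonneg_left hyn1 hnum0
        have t2 : β * h * ∑ i ∈ Finset.Icc 1 (n - 1), k (n - i) * y i
            ≤ β * h * (κ * α) := mul_le_mul_of_nonneg_left hS1 hβh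
        have t3 : (1 - β) * h * ∑ j ∈ Finset.Icc 1 (n - 2), k (n - j) * y j
            ≤ (1 - β) * h * (κ * α) := mul_le_mul_of_nonneg_left hS2 hβh'
        calc D * y n = (1 + (1 - β) * lam * h) * y (n - 1)
              + β * h * ∑ i ∈ Finset.Icc 1 (n - 1), k (n - i) * y i
              + (1 - β) * h * ∑ j ∈ Finset.Icc 1 (n - 2), k (n - j) * y j := hrecn
          _ ≤ (1 + (1 - β) * lam * h) * α + β * h * (κ * α) + (1 - β) * h * (κ * α) := by
              linarith
          _ = α * N := by rw [hN]; ring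
      have : y n * D ≤ α * D := by
        have : α * N ≤ α * D := mul_le_mul_of_nonneg_left hND.le hα0
        nlinarith [hstep]
      exact le_of_mul_le_mul_right this hD
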